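/- Let $C$ be an object of a triangulated K3 category and $E$ a spherical object with $T_E(C) \cong C[-1]$ (e.g. $C \in \langle E \rangle$), and $N$ any object. Then $2\, i(C, N) \geq i(E, C)\, i(E, N)$, where $i(X,Y) = \sum_j \dim\operatorname{Hom}(X, Y[j])$. -/

import Mathlib

open CategoryTheory Limits Pretriangulated Module

variable (k : Type*) [Field k] (C : Type*) [Category C] [Preadditive C] [Linear k C]
  [HasZeroObject C] [HasShift C ℤ] [∀ n : ℤ, (shiftFunctor C n).Additive]
  [Pretriangulated C] [HasFiniteBiproducts C]

/-- A spherical object: `Hom(E, E[i])` is one-dimensional for `i = 0, 2` and zero otherwise. -/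
def IsSpherical (E : C) : Prop :=
  finrank k (E ⟶ E⟦(0 : ℤ)⟧) = 1 ∧ finrank k (E ⟶ E⟦(2 : ℤ)⟧) = 1 ∧
    ∀ i : ℤ, i ≠ 0 → i ≠ 2 → ∀ φ : E ⟶ E⟦i⟧, φ = 0

/-- The object `⊕ᵢ Hom(E, M[i]) ⊗ E[-i]`, realised as a finite biproduct of shifted
copies of `E`, where `s` is a finite set containing the support of `i ↦ Hom(E, M[i])`. -/
noncomputable def twistSrc (E M : C) (s : Finset ℤ) : C :=
  ⨁ fun p : Σ j : s, Fin (finrank k (E ⟶ M⟦(j : ℤ)⟧)) => E⟦(-(p.1 : ℤ))⟧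

/-- The intersection index `i(M, N) = ∑ⱼ dim Hom(M, N[j])`. -/
noncomputable def interIdx (M N : C) : ℕ :=
  ∑ᶠ j : ℤ, finrank k (M ⟶ N⟦j⟧)


set_option linter.unusedSectionVars false

-- linear algebra subadditivity
lemma aux_finrank_le {K V W U : Type*} [Field K] [AddCommGroup V] [Module K V]
    [AddCommGroup W] [Module K W] [AddCommGroup U] [Module K U]
    [FiniteDimensional K V] [FiniteDimensional K W] [FiniteDimensional K U]
    (v : V →ₗ[K] U) (u : W →ₗ[K] V) (h : LinearMap.ker v ≤ LinearMap.range u) :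
    finrank K V ≤ finrank K W + finrank K U := by
  have h1 := LinearMap.finrank_range_add_finrank_ker v
  have h2 : finrank K (LinearMap.ker v) ≤ finrank K (LinearMap.range u) :=
    Submodule.finrank_mono h
  have h3 : finrank K (LinearMap.range u) ≤ finrank K W := u.finrank_range_le
  have h4 : finrank K (LinearMap.range v) ≤ finrank K U := (LinearMap.range v).finrank_le
  omega

lemma tri_subadd [∀ X Y : C, FiniteDimensional k (X ⟶ Y)]
    (T' : Triangle C) (hT : T' ∈ distTriang C) (Z : C) :
    finrank k (T'.obj₂ ⟶ Z) ≤ finrank k (T'.obj₃ ⟶ Z) + finrank k (T'.obj₁ ⟶ Z) := by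
  apply aux_finrank_le (Linear.leftComp k Z T'.mor₁) (Linear.leftComp k Z T'.mor₂)
  intro f hf
  obtain ⟨g, hg⟩ := Triangle.yoneda_exact₂ _ hT f (by simpa using hf)
  exact ⟨g, hg.symm⟩

lemma shift_finrank [∀ X Y : C, FiniteDimensional k (X ⟶ Y)]
    (hSerre : ∀ (X Y : C) (i : ℤ), finrank k (X ⟶ Y⟦i⟧) = finrank k (Y ⟶ X⟦2 - i⟧))
    (A B : C) (a m : ℤ) :
    finrank k (A⟦a⟧ ⟶ B⟦m⟧) = finrank k (A ⟶ B⟦m - a⟧) := by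
  rw [hSerre, hSerre A B (m - a)]
  have h : (2 : ℤ) - (m - a) = a + (2 - m) := by ring
  rw [h]
  exact LinearEquiv.finrank_eq
    (Linear.homCongr k (Iso.refl B) ((shiftFunctorAdd C a (2 - m)).symm.app A))

/-- `Hom(⨁ f, Z)` as a `k`-linear equiv with the product of the `Hom(f i, Z)`. -/
noncomputable def biprodHomLinEquiv {ι : Type} [Fintype ι] (f : ι → C) (Z : C) :
    ((⨁ f) ⟶ Z) ≃ₗ[k] ∀ i, (f i ⟶ Z) where
  toFun g i := biproduct.ι f i ≫ g
  map_add' g h := by funext i; simp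
  map_smul' c g := by funext i; simp
  invFun h := biproduct.desc h
  left_inv g := by apply biproduct.hom_ext'; intro i; simp
  right_inv h := by funext i; simp


theorem stmt_14 {k : Type*} [Field k] {C : Type*} [Category C] [Preadditive C] [Linear k C]
    [HasZeroObject C] [HasShift C ℤ] [∀ n : ℤ, (shiftFunctor C n).Additive]
    [Pretriangulated C] [HasFiniteBiproducts C] [∀ X Y : C, FiniteDimensional k (X ⟶ Y)]
    -- finite type: graded Homs vanish for almost all degrees
    (hfin : ∀ X Y : C, (Function.support fun j : ℤ => finrank k (X ⟶ Y⟦j⟧)).Finite)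
    -- K3 category: Serre duality `Hom(X, Y[i]) ≅ Hom(Y, X[2 - i])^*`
    (hSerre : ∀ (X Y : C) (i : ℤ), finrank k (X ⟶ Y⟦i⟧) = finrank k (Y ⟶ X⟦2 - i⟧))
    (E : C) (hE : IsSpherical k C E)
    (T : C ⥤ C) [T.CommShift ℤ] [T.IsTriangulated]
    (X N : C)
    -- the defining triangle of the twist at `X`
    (s : Finset ℤ) (hs : ∀ j ∉ s, ∀ φ : E ⟶ X⟦j⟧, φ = 0)
    (ev : twistSrc k C E X s ⟶ X) (g : X ⟶ T.obj X)
    (δ : T.obj X ⟶ (twistSrc k C E X s)⟦(1 : ℤ)⟧)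
    (hdist : Triangle.mk ev g δ ∈ distTriang C)
    (hev : ∀ j : ℤ, Function.Surjective
      fun φ : E ⟶ (twistSrc k C E X s)⟦j⟧ => φ ≫ (shiftFunctor C j).map ev)
    -- `T(X) ≅ X[-1]` (e.g. because `X` lies in the subcategory generated by `E`)
    (hiso : Nonempty (T.obj X ≅ X⟦(-1 : ℤ)⟧)) :
    interIdx k C E X * interIdx k C E N ≤ 2 * interIdx k C X N := by
  classical
  obtain ⟨ι⟩ := hiso
  simp only [interIdx]
  -- F1 : dimension of Hom out of the twist source
  have F1 : ∀ m : ℤ, finrank k (twistSrc k C E X s ⟶ N⟦m⟧)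
      = ∑ j ∈ s, finrank k (E ⟶ X⟦j⟧) * finrank k (E ⟶ N⟦m + j⟧) := by
    intro m
    calc finrank k (twistSrc k C E X s ⟶ N⟦m⟧)
        = finrank k (∀ p : Σ j : s, Fin (finrank k (E ⟶ X⟦(j : ℤ)⟧)),
            (E⟦(-(p.1 : ℤ))⟧ ⟶ N⟦m⟧)) :=
          LinearEquiv.finrank_eq (biprodHomLinEquiv k C
            (fun p : Σ j : s, Fin (finrank k (E ⟶ X⟦(j : ℤ)⟧)) => E⟦(-(p.1 : ℤ))⟧) (N⟦m⟧))
      _ = ∑ p : Σ j : s, Fin (finrank k (E ⟶ X⟦(j : ℤ)⟧)),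
            finrank k (E⟦(-(p.1 : ℤ))⟧ ⟶ N⟦m⟧) := Module.finrank_pi_fintype k
      _ = ∑ p : Σ j : s, Fin (finrank k (E ⟶ X⟦(j : ℤ)⟧)),
            finrank k (E ⟶ N⟦m + (p.1 : ℤ)⟧) := by
          refine Finset.sum_congr rfl fun p _ => ?_
          rw [shift_finrank k C hSerre, sub_neg_eq_add]
      _ = ∑ j : s, ∑ _i : Fin (finrank k (E ⟶ X⟦(j : ℤ)⟧)),
            finrank k (E ⟶ N⟦m + (j : ℤ)⟧) := by
          rw [← Finset.univ_sigma_univ, Finset.sum_sigma]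
      _ = ∑ j : s, finrank k (E ⟶ X⟦(j : ℤ)⟧) * finrank k (E ⟶ N⟦m + (j : ℤ)⟧) := by
          refine Finset.sum_congr rfl fun j _ => ?_
          simp [Finset.sum_const, mul_comm]
      _ = ∑ j ∈ s, finrank k (E ⟶ X⟦j⟧) * finrank k (E ⟶ N⟦m + j⟧) :=
          Finset.sum_coe_sort s
            (fun j : ℤ => finrank k (E ⟶ X⟦j⟧) * finrank k (E ⟶ N⟦m + j⟧))
  -- F2 : subadditivity
  have F2 : ∀ m : ℤ, finrank k (twistSrc k C E X s ⟶ N⟦m⟧)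
      ≤ finrank k (X ⟶ N⟦m⟧) + finrank k (X ⟶ N⟦m + 2⟧) := by
    intro m
    have h := tri_subadd k C (Triangle.mk ev g δ).invRotate
      (inv_rot_of_distTriang _ hdist) (N⟦m⟧)
    have e1 : finrank k ((T.obj X)⟦(-1 : ℤ)⟧ ⟶ N⟦m⟧) = finrank k (X ⟶ N⟦m + 2⟧) := by
      have i1 : ((T.obj X)⟦(-1 : ℤ)⟧ ⟶ N⟦m⟧) ≃ₗ[k] ((X⟦(-1 : ℤ)⟧)⟦(-1 : ℤ)⟧ ⟶ N⟦m⟧) :=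
        Linear.homCongr k ((shiftFunctor C (-1 : ℤ)).mapIso ι) (Iso.refl _)
      rw [i1.finrank_eq, shift_finrank k C hSerre, shift_finrank k C hSerre]
      have h2 : m - -1 - -1 = m + 2 := by ring
      rw [h2]
    change finrank k (twistSrc k C E X s ⟶ N⟦m⟧) ≤ finrank k (X ⟶ N⟦m⟧)
      + finrank k ((T.obj X)⟦(-1 : ℤ)⟧ ⟶ N⟦m⟧) at h
    rw [e1] at h
    exact h
  -- F3 : support of j ↦ dim Hom(E, X[j]) inside s
  have F3 : (∑ᶠ j : ℤ, finrank k (E ⟶ X⟦j⟧)) = ∑ j ∈ s, finrank k (E ⟶ X⟦j⟧) := by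
    apply finsum_eq_sum_of_support_subset
    intro j hj
    simp only [Function.mem_support] at hj
    by_contra hjs
    have : Subsingleton (E ⟶ X⟦j⟧) := ⟨fun a b => by rw [hs j hjs a, hs j hjs b]⟩
    exact hj finrank_zero_of_subsingleton
  set Se := (hfin E N).toFinset with hSe
  set Sx := (hfin X N).toFinset with hSx
  set t : Finset ℤ := s.biUnion (fun j => Se.image (fun m => m - j)) with ht
  set u : Finset ℤ := (t ∪ Sx) ∪ Sx.image (fun m => m - 2) with hu
  have hsupp : (Function.support fun m : ℤ => finrank k (twistSrc k C E X s ⟶ N⟦m⟧)) ⊆ ↑t := by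
    intro m hm
    simp only [Function.mem_support] at hm
    rw [F1 m] at hm
    obtain ⟨j, hj, hne⟩ := Finset.exists_ne_zero_of_sum_ne_zero hm
    have hne' : finrank k (E ⟶ N⟦m + j⟧) ≠ 0 := fun h0 => hne (by rw [h0, mul_zero])
    refine Finset.mem_coe.2 (Finset.mem_biUnion.2 ⟨j, hj, Finset.mem_image.2 ⟨m + j, ?_, by ring⟩⟩)
    exact (hfin E N).mem_toFinset.2 hne'
  have hEt : ∀ j ∈ s, ∑ m ∈ t, finrank k (E ⟶ N⟦m + j⟧)
      = ∑ᶠ m : ℤ, finrank k (E ⟶ N⟦m⟧) := by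
    intro j hj
    have inj : ∀ m1 ∈ t, ∀ m2 ∈ t, m1 + j = m2 + j → m1 = m2 := fun a _ b _ h => by omega
    calc ∑ m ∈ t, finrank k (E ⟶ N⟦m + j⟧)
        = ∑ m' ∈ t.image (fun m => m + j), finrank k (E ⟶ N⟦m'⟧) :=
          (Finset.sum_image (f := fun m' : ℤ => finrank k (E ⟶ N⟦m'⟧)) inj).symm
      _ = ∑ᶠ m : ℤ, finrank k (E ⟶ N⟦m⟧) := by
          refine (finsum_eq_sum_of_support_subset _ ?_).symm
          intro m' hm'
          simp only [Function.mem_support] at hm'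
          refine Finset.mem_coe.2 (Finset.mem_image.2 ⟨m' - j, ?_, by ring⟩)
          exact Finset.mem_biUnion.2 ⟨j, hj,
            Finset.mem_image.2 ⟨m', (hfin E N).mem_toFinset.2 hm', rfl⟩⟩
  -- key identity
  have key : (∑ᶠ j : ℤ, finrank k (E ⟶ X⟦j⟧)) * (∑ᶠ m : ℤ, finrank k (E ⟶ N⟦m⟧))
      = ∑ᶠ m : ℤ, finrank k (twistSrc k C E X s ⟶ N⟦m⟧) := by
    rw [finsum_eq_sum_of_support_subset _ hsupp, F3]
    calc (∑ j ∈ s, finrank k (E ⟶ X⟦j⟧)) * (∑ᶠ m : ℤ, finrank k (E ⟶ N⟦m⟧))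
        = ∑ j ∈ s, finrank k (E ⟶ X⟦j⟧) * (∑ᶠ m : ℤ, finrank k (E ⟶ N⟦m⟧)) :=
          Finset.sum_mul ..
      _ = ∑ j ∈ s, finrank k (E ⟶ X⟦j⟧) * ∑ m ∈ t, finrank k (E ⟶ N⟦m + j⟧) :=
          Finset.sum_congr rfl fun j hj => by rw [hEt j hj]
      _ = ∑ j ∈ s, ∑ m ∈ t, finrank k (E ⟶ X⟦j⟧) * finrank k (E ⟶ N⟦m + j⟧) := by
          simp [Finset.mul_sum]
      _ = ∑ m ∈ t, ∑ j ∈ s, finrank k (E ⟶ X⟦j⟧) * finrank k (E ⟶ N⟦m + j⟧) :=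
          Finset.sum_comm
      _ = ∑ m ∈ t, finrank k (twistSrc k C E X s ⟶ N⟦m⟧) :=
          Finset.sum_congr rfl fun m _ => (F1 m).symm
  rw [key]
  -- final inequality
  have htu : (↑t : Set ℤ) ⊆ ↑u := by
    intro a ha
    simp only [hu, Finset.coe_union, Set.mem_union]
    left; left; exact ha
  have hXu0 : ∑ᶠ m : ℤ, finrank k (X ⟶ N⟦m⟧) = ∑ m ∈ u, finrank k (X ⟶ N⟦m⟧) := by
    apply finsum_eq_sum_of_support_subset
    intro m hm
    simp only [hu, Finset.coe_union, Set.mem_union]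
    left; right
    exact Finset.mem_coe.1 ((hfin X N).mem_toFinset.2 hm)
  have hXu2 : ∑ m ∈ u, finrank k (X ⟶ N⟦m + 2⟧) = ∑ᶠ m : ℤ, finrank k (X ⟶ N⟦m⟧) := by
    have inj : ∀ m1 ∈ u, ∀ m2 ∈ u, m1 + 2 = m2 + 2 → m1 = m2 := fun a _ b _ h => by omega
    calc ∑ m ∈ u, finrank k (X ⟶ N⟦m + 2⟧)
        = ∑ m' ∈ u.image (fun m => m + 2), finrank k (X ⟶ N⟦m'⟧) :=
          (Finset.sum_image (f := fun m' : ℤ => finrank k (X ⟶ N⟦m'⟧)) inj).symm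
      _ = ∑ᶠ m : ℤ, finrank k (X ⟶ N⟦m⟧) := by
          refine (finsum_eq_sum_of_support_subset _ ?_).symm
          intro m' hm'
          refine Finset.mem_coe.2 (Finset.mem_image.2 ⟨m' - 2, ?_, by ring⟩)
          simp only [hu]
          refine Finset.mem_union.2 (Or.inr ?_)
          exact Finset.mem_image.2 ⟨m', (hfin X N).mem_toFinset.2 hm', rfl⟩
  calc ∑ᶠ m : ℤ, finrank k (twistSrc k C E X s ⟶ N⟦m⟧)
      = ∑ m ∈ u, finrank k (twistSrc k C E X s ⟶ N⟦m⟧) :=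
        finsum_eq_sum_of_support_subset _ (hsupp.trans htu)
    _ ≤ ∑ m ∈ u, (finrank k (X ⟶ N⟦m⟧) + finrank k (X ⟶ N⟦m + 2⟧)) :=
        Finset.sum_le_sum fun m _ => F2 m
    _ = ∑ m ∈ u, finrank k (X ⟶ N⟦m⟧) + ∑ m ∈ u, finrank k (X ⟶ N⟦m + 2⟧) :=
        Finset.sum_add_distrib
    _ = 2 * ∑ᶠ m : ℤ, finrank k (X ⟶ N⟦m⟧) := by
        rw [← hXu0, hXu2]; ring
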